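/- (Density of the folded Gaussian kernel.) Let σ > 0 and let φ_σ(u) = (2πσ²)^{−1/2} exp(−u²/(2σ²)) be the density of the centered Gaussian with variance σ². Define the fold map f : ℝ → [0, 1] by f(x) = 1 − |(x mod 2) − 1|. Then for every t ∈ ℝ, the pushforward under f of the Gaussian measure with mean t and variance σ² is absolutely continuous with respect to Lebesgue measure on [0, 1], with density g(t, t′) = Σ_{k ∈ ℤ} [φ_σ(2k + t′ − t) + φ_σ(2k − t′ − t)] for t′ ∈ [0, 1] (the series converging absolutely). -/

import Mathlib

open MeasureTheory ProbabilityTheory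
open scoped ENNReal

/-- The 2-periodic tent ("fold") map `f(x) = 1 − |(x mod 2) − 1|`, sending `ℝ`
onto `[0, 1]`; here `x mod 2 = 2 · fract (x / 2) ∈ [0, 2)`. -/
noncomputable def fold (x : ℝ) : ℝ := 1 - |2 * Int.fract (x / 2) - 1|

/-- The density `φ_σ(u) = (2πσ²)^{−1/2} exp(−u²/(2σ²))` of the centered
one-dimensional Gaussian with variance `σ²`. -/
noncomputable def gaussPDF (σ u : ℝ) : ℝ :=
  (2 * Real.pi * σ ^ 2) ^ (-(1 : ℝ) / 2) * Real.exp (-u ^ 2 / (2 * σ ^ 2))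

lemma summable_exp_nat (b c : ℝ) (hb : 0 < b) :
    Summable fun n : ℕ => Real.exp (-(2 * n + c) ^ 2 / b) := by
  have hr : Real.exp (-1 / b) < 1 := Real.exp_lt_one_iff.mpr (by
    apply div_neg_of_neg_of_pos <;> norm_num [hb])
  have hgeo : Summable fun n : ℕ => Real.exp (c ^ 2 / b) * Real.exp (-1 / b) ^ n :=
    (summable_geometric_of_lt_one (Real.exp_nonneg _) hr).mul_left _
  refine hgeo.of_nonneg_of_le (fun n => (Real.exp_nonneg _)) fun n => ?_
  rw [← Real.exp_nat_mul, ← Real.exp_add]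
  apply Real.exp_le_exp.mpr
  have h1 : (n:ℝ) ≤ 2 * (n:ℝ)^2 := by
    have : (n:ℝ) ≤ (n:ℝ)^2 := by
      rcases Nat.eq_zero_or_pos n with h | h
      · simp [h]
      · nlinarith [(Nat.one_le_cast (α := ℝ)).mpr h]
    linarith
  have h2 : 2 * (n:ℝ)^2 - c^2 ≤ (2 * n + c)^2 := by nlinarith [sq_nonneg ((n:ℝ) + c)]
  rw [mul_div_assoc', mul_neg, mul_one, ← add_div, div_le_div_iff_of_pos_right hb]
  linarith

lemma summable_exp_int (b c : ℝ) (hb : 0 < b) :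
    Summable fun k : ℤ => Real.exp (-(2 * k + c) ^ 2 / b) := by
  apply Summable.of_nat_of_neg
  · exact summable_exp_nat b c hb
  · have := summable_exp_nat b (-c) hb
    refine this.congr fun n => ?_
    push_cast; ring_nf

lemma gaussPDF_nonneg (σ u : ℝ) : 0 ≤ gaussPDF σ u := by
  unfold gaussPDF; positivity

lemma gaussPDF_eq (σ t x : ℝ) (hσ : 0 < σ) :
    gaussianPDFReal t ⟨σ ^ 2, sq_nonneg σ⟩ x = gaussPDF σ (x - t) := by
  unfold gaussianPDFReal gaussPDF
  show (Real.sqrt (2 * Real.pi * σ ^ 2))⁻¹ * Real.exp (-(x - t) ^ 2 / (2 * σ ^ 2)) = _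
  congr 1
  rw [Real.sqrt_eq_rpow, ← Real.rpow_neg (by positivity)]
  norm_num

lemma summable_gaussPDF (σ : ℝ) (hσ : 0 < σ) (c : ℝ) :
    Summable fun k : ℤ => gaussPDF σ (2 * k + c) := by
  unfold gaussPDF
  exact (summable_exp_int (2 * σ ^ 2) c (by positivity)).mul_left _

lemma fract_half (k : ℤ) (x : ℝ) (h1 : 2 * k ≤ x) (h2 : x < 2 * k + 2) :
    Int.fract (x / 2) = x / 2 - k := by
  have hf : ⌊x / 2⌋ = k := by
    rw [Int.floor_eq_iff]; constructor <;> [skip; push_cast] <;> linarith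
  rw [Int.fract, hf]

lemma fold_even (k : ℤ) (x : ℝ) (h1 : 2 * k ≤ x) (h2 : x < 2 * k + 1) :
    fold x = x - 2 * k := by
  rw [fold, fract_half k x h1 (by linarith), abs_of_nonpos (by linarith)]
  ring

lemma fold_odd (k : ℤ) (x : ℝ) (h1 : 2 * k + 1 ≤ x) (h2 : x < 2 * k + 2) :
    fold x = 2 * k + 2 - x := by
  rw [fold, fract_half k x (by linarith) h2, abs_of_nonneg (by linarith)]
  ring

lemma measurable_fold : Measurable fold :=
  measurable_const.sub
    (((measurable_fract.comp (measurable_id.div_const 2)).const_mul 2).sub measurable_const).abs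

lemma preimage_even (s : Set ℝ) (k : ℤ) :
    fold ⁻¹' s ∩ Set.Ico (2 * k : ℝ) (2 * k + 1)
      = (fun x : ℝ => x - 2 * k) ⁻¹' (s ∩ Set.Ico 0 1) := by
  ext x
  simp only [Set.mem_inter_iff, Set.mem_preimage, Set.mem_Ico]
  constructor
  · rintro ⟨hx, h1, h2⟩
    rw [fold_even k x h1 h2] at hx
    exact ⟨hx, by linarith, by linarith⟩
  · rintro ⟨hx, h1, h2⟩
    have hb1 : 2 * (k:ℝ) ≤ x := by linarith
    have hb2 : x < 2 * (k:ℝ) + 1 := by linarith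
    exact ⟨by rw [fold_even k x hb1 hb2]; exact hx, hb1, hb2⟩

lemma preimage_odd (s : Set ℝ) (k : ℤ) :
    fold ⁻¹' s ∩ Set.Ico (2 * k + 1 : ℝ) (2 * k + 2)
      = (fun x : ℝ => 2 * k + 2 - x) ⁻¹' (s ∩ Set.Ioc 0 1) := by
  ext x
  simp only [Set.mem_inter_iff, Set.mem_preimage, Set.mem_Ico, Set.mem_Ioc]
  constructor
  · rintro ⟨hx, h1, h2⟩
    rw [fold_odd k x h1 h2] at hx
    exact ⟨hx, by linarith, by linarith⟩
  · rintro ⟨hx, h1, h2⟩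
    have hb1 : 2 * (k:ℝ) + 1 ≤ x := by linarith
    have hb2 : x < 2 * (k:ℝ) + 2 := by linarith
    exact ⟨by rw [fold_odd k x hb1 hb2]; exact hx, hb1, hb2⟩

theorem fold_gaussian_density (σ : ℝ) (hσ : 0 < σ) (t : ℝ) :
    (∀ t' : ℝ,
      Summable fun k : ℤ =>
        gaussPDF σ (2 * k + t' - t) + gaussPDF σ (2 * k - t' - t)) ∧
    Measure.map fold (gaussianReal t ⟨σ ^ 2, sq_nonneg σ⟩)
      = (volume.restrict (Set.Icc (0 : ℝ) 1)).withDensity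
          (fun t' => ENNReal.ofReal
            (∑' k : ℤ,
              (gaussPDF σ (2 * k + t' - t) + gaussPDF σ (2 * k - t' - t)))) := by
  have hsum : ∀ t' : ℝ,
      Summable fun k : ℤ =>
        gaussPDF σ (2 * k + t' - t) + gaussPDF σ (2 * k - t' - t) := by
    intro t'
    refine Summable.add ?_ ?_
    · exact (summable_gaussPDF σ hσ (t' - t)).congr fun k => by ring_nf
    · exact (summable_gaussPDF σ hσ (-t' - t)).congr fun k => by ring_nf
  refine ⟨hsum, ?_⟩
  set v : NNReal := ⟨σ ^ 2, sq_nonneg σ⟩ with hv_def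
  have hv : v ≠ 0 := by
    intro h
    have : (v : ℝ) = 0 := by rw [h]; simp
    exact pow_ne_zero 2 hσ.ne' this
  set φ : ℝ → ℝ≥0∞ := gaussianPDF t v with hφ_def
  have hφmeas : Measurable φ := measurable_gaussianPDF t v
  -- pointwise identity
  have hpt : ∀ u : ℝ, (∑' k : ℤ, (φ (u + 2 * k) + φ (2 * k - u)))
      = ENNReal.ofReal (∑' k : ℤ,
          (gaussPDF σ (2 * k + u - t) + gaussPDF σ (2 * k - u - t))) := by
    intro u
    rw [ENNReal.ofReal_tsum_of_nonneg
      (fun k => add_nonneg (gaussPDF_nonneg _ _) (gaussPDF_nonneg _ _)) (hsum u)]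
    congr 1
    funext k
    rw [ENNReal.ofReal_add (gaussPDF_nonneg _ _) (gaussPDF_nonneg _ _)]
    congr 1
    · rw [hφ_def, gaussianPDF, gaussPDF_eq σ t _ hσ]
      congr 2
      ring
    · rw [hφ_def, gaussianPDF, gaussPDF_eq σ t _ hσ]
  refine Measure.ext fun s hs => ?_
  rw [Measure.map_apply measurable_fold hs, gaussianReal_of_var_ne_zero t hv,
    withDensity_apply _ (measurable_fold hs), withDensity_apply _ hs,
    Measure.restrict_restrict hs]
  -- decompose the preimage
  have hcover : fold ⁻¹' s = ⋃ k : ℤ, fold ⁻¹' s ∩ Set.Ico (2 * k : ℝ) (2 * k + 2) := by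
    rw [← Set.inter_iUnion]
    rw [show (⋃ k : ℤ, Set.Ico (2 * k : ℝ) (2 * k + 2)) = Set.univ from ?_, Set.inter_univ]
    ext x
    simp only [Set.mem_iUnion, Set.mem_Ico, Set.mem_univ, iff_true]
    refine ⟨⌊x / 2⌋, ?_, ?_⟩
    · have := Int.floor_le (x / 2); linarith
    · have := Int.lt_floor_add_one (x / 2); linarith
  have hm : ∀ k : ℤ, MeasurableSet (fold ⁻¹' s ∩ Set.Ico (2 * k : ℝ) (2 * k + 2)) :=
    fun k => (measurable_fold hs).inter measurableSet_Ico
  have hdisj : Pairwise (Function.onFun Disjoint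
      fun k : ℤ => fold ⁻¹' s ∩ Set.Ico (2 * k : ℝ) (2 * k + 2)) := by
    intro i j hij
    refine Set.disjoint_left.mpr ?_
    rintro x ⟨-, hi1, hi2⟩ ⟨-, hj1, hj2⟩
    rcases lt_or_gt_of_ne hij with h | h
    · have : (i:ℝ) + 1 ≤ j := by exact_mod_cast h
      linarith
    · have : (j:ℝ) + 1 ≤ i := by exact_mod_cast h
      linarith
  rw [hcover, lintegral_iUnion hm hdisj]
  -- split each piece into even and odd parts
  have hsplit : ∀ k : ℤ,
      ∫⁻ x in fold ⁻¹' s ∩ Set.Ico (2 * k : ℝ) (2 * k + 2), φ x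
        = (∫⁻ u in s ∩ Set.Ico (0:ℝ) 1, φ (u + 2 * k))
          + ∫⁻ u in s ∩ Set.Ioc (0:ℝ) 1, φ (2 * k + 2 - u) := by
    intro k
    have hi : Set.Ico (2 * k : ℝ) (2 * k + 2)
        = Set.Ico (2 * k : ℝ) (2 * k + 1) ∪ Set.Ico (2 * k + 1 : ℝ) (2 * k + 2) :=
      (Set.Ico_union_Ico_eq_Ico (by linarith) (by linarith)).symm
    rw [hi, Set.inter_union_distrib_left, lintegral_union
      ((measurable_fold hs).inter measurableSet_Ico)
      (by
        refine Set.disjoint_left.mpr ?_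
        rintro x ⟨-, -, h2⟩ ⟨-, h3, -⟩
        linarith)]
    congr 1
    · rw [preimage_even]
      have := (measurePreserving_sub_right volume (2 * k : ℝ)).setLIntegral_comp_preimage_emb
        (MeasurableEquiv.subRight (2 * k : ℝ)).measurableEmbedding
        (fun u => φ (u + 2 * k)) (s ∩ Set.Ico 0 1)
      calc ∫⁻ x in (fun x : ℝ => x - 2 * k) ⁻¹' (s ∩ Set.Ico 0 1), φ x
          = ∫⁻ x in (fun x : ℝ => x - 2 * k) ⁻¹' (s ∩ Set.Ico 0 1), φ ((x - 2 * k) + 2 * k) := by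
            apply lintegral_congr; intro x; congr 1; ring
        _ = ∫⁻ u in s ∩ Set.Ico (0:ℝ) 1, φ (u + 2 * k) := this
    · rw [preimage_odd]
      have := (Measure.measurePreserving_sub_left volume (2 * k + 2 : ℝ)).setLIntegral_comp_preimage_emb
        (MeasurableEquiv.subLeft (2 * k + 2 : ℝ)).measurableEmbedding
        (fun u => φ (2 * k + 2 - u)) (s ∩ Set.Ioc 0 1)
      calc ∫⁻ x in (fun x : ℝ => 2 * k + 2 - x) ⁻¹' (s ∩ Set.Ioc 0 1), φ x
          = ∫⁻ x in (fun x : ℝ => 2 * k + 2 - x) ⁻¹' (s ∩ Set.Ioc 0 1),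
              φ (2 * k + 2 - (2 * k + 2 - x)) := by
            apply lintegral_congr; intro x; congr 1; ring
        _ = ∫⁻ u in s ∩ Set.Ioc (0:ℝ) 1, φ (2 * k + 2 - u) := this
  rw [← hφ_def]
  simp_rw [hsplit]
  rw [ENNReal.tsum_add]
  -- reindex the odd sum
  have hodd : (∑' k : ℤ, ∫⁻ u in s ∩ Set.Ioc (0:ℝ) 1, φ (2 * k + 2 - u))
      = ∑' k : ℤ, ∫⁻ u in s ∩ Set.Ioc (0:ℝ) 1, φ (2 * k - u) := by
    have := (Equiv.addRight (1 : ℤ)).tsum_eq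
      fun k : ℤ => ∫⁻ u in s ∩ Set.Ioc (0:ℝ) 1, φ (2 * k - u)
    rw [← this]
    congr 1
    funext k
    apply lintegral_congr
    intro u
    congr 1
    simp only [Equiv.coe_addRight]
    push_cast
    ring
  rw [hodd]
  -- move to Icc
  have haeIco : (s ∩ Set.Ico (0:ℝ) 1 : Set ℝ) =ᵐ[volume] (s ∩ Set.Icc (0:ℝ) 1 : Set ℝ) := by
    refine Filter.EventuallyEq.inter (by rfl) Ico_ae_eq_Icc
  have haeIoc : (s ∩ Set.Ioc (0:ℝ) 1 : Set ℝ) =ᵐ[volume] (s ∩ Set.Icc (0:ℝ) 1 : Set ℝ) := by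
    refine Filter.EventuallyEq.inter (by rfl) Ioc_ae_eq_Icc
  simp_rw [setLIntegral_congr haeIco, setLIntegral_congr haeIoc]
  rw [← ENNReal.tsum_add]
  have hmeas2 : ∀ k : ℤ, Measurable fun u : ℝ => φ (u + 2 * k) + φ (2 * k - u) := by
    intro k
    exact (hφmeas.comp (measurable_id.add_const _)).add
      (hφmeas.comp (measurable_const.sub measurable_id))
  calc (∑' k : ℤ, ((∫⁻ u in s ∩ Set.Icc (0:ℝ) 1, φ (u + 2 * k))
          + ∫⁻ u in s ∩ Set.Icc (0:ℝ) 1, φ (2 * k - u)))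
      = ∑' k : ℤ, ∫⁻ u in s ∩ Set.Icc (0:ℝ) 1, (φ (u + 2 * k) + φ (2 * k - u)) := by
        congr 1; funext k
        exact (lintegral_add_left (hφmeas.comp (measurable_id.add_const (2*(k:ℝ)))) _).symm
    _ = ∫⁻ u in s ∩ Set.Icc (0:ℝ) 1, ∑' k : ℤ, (φ (u + 2 * k) + φ (2 * k - u)) := by
        rw [lintegral_tsum fun k => (hmeas2 k).aemeasurable]
    _ = ∫⁻ u in s ∩ Set.Icc (0:ℝ) 1, ENNReal.ofReal (∑' k : ℤ,
          (gaussPDF σ (2 * k + u - t) + gaussPDF σ (2 * k - u - t))) := by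
        apply lintegral_congr; intro u; exact hpt u
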